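/- (Hall) Let S be a finite nonabelian simple group and let s₁ = (s₁₁,…,s₁ₙ),…,s_k = (s_{k1},…,s_{kn}) be generating sequences of S of length n. Then the k-tuples ((s₁₁,…,s_{k1}),…,(s₁ₙ,…,s_{kn})) generate the direct product Sᵏ if and only if sᵢ and sⱼ are not equivalent under the action of Aut(S) on Γ_n(S) for all i ≠ j. -/
import Mathlib

/-- `(x₁,…,xₙ)` is a generating sequence of `G`: the entries generate `G`. -/
def IsGenSeq {G : Type*} [Group G] {n : ℕ} (x : Fin n → G) : Prop :=
  Subgroup.closure (Set.range x) = ⊤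

/-- `r(G)`: the least `n` such that `G` has a generating sequence of length `n`. -/
noncomputable def grank (G : Type*) [Group G] : ℕ :=
  sInf {n : ℕ | ∃ x : Fin n → G, IsGenSeq x}

/-- `G` is homogeneous of rank `n`: `Γ_n(G)` is nonempty and `Aut(G)` acts
transitively on it. -/
def IsHomogeneous (G : Type*) [Group G] (n : ℕ) : Prop :=
  (∃ x : Fin n → G, IsGenSeq x) ∧
    ∀ x y : Fin n → G, IsGenSeq x → IsGenSeq y → ∃ f : G ≃* G, ∀ i, f (x i) = y i

section HallAux

variable {S : Type*} [Group S]

/-- `a ↦ (a, 1, …, 1)` as a monoid hom. -/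
def consHom (k : ℕ) : S →* (Fin (k + 1) → S) where
  toFun a := Fin.cons a 1
  map_one' := by
    funext j
    refine Fin.cases ?_ (fun j => ?_) j <;> simp
  map_mul' a b := by
    funext j
    refine Fin.cases ?_ (fun j => ?_) j <;> simp

/-- `g ↦ (g 1, …, g k)` as a monoid hom. -/
def tailHom (k : ℕ) : (Fin (k + 1) → S) →* (Fin k → S) where
  toFun g := g ∘ Fin.succ
  map_one' := rfl
  map_mul' _ _ := rfl

lemma conj_consHom (k : ℕ) (u : Fin (k + 1) → S) (a : S) :
    u * consHom k a * u⁻¹ = consHom k (u 0 * a * (u 0)⁻¹) := by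
  funext j
  refine Fin.cases ?_ (fun j => ?_) j <;> simp [consHom]

lemma decomp (k : ℕ) (g : Fin (k + 1) → S) :
    g = consHom k (g 0) * Fin.cons 1 (g ∘ Fin.succ) := by
  funext j
  refine Fin.cases ?_ (fun j => ?_) j <;> simp [consHom]

/-- `u ↦ (1, u 1, …, u k)` as a monoid hom. -/
def cons1Hom (k : ℕ) : (Fin k → S) →* (Fin (k + 1) → S) where
  toFun u := Fin.cons 1 u
  map_one' := by
    funext j
    refine Fin.cases ?_ (fun j => ?_) j <;> simp
  map_mul' a b := by
    funext j
    refine Fin.cases ?_ (fun j => ?_) j <;> simp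

lemma conj_cons1Hom (k : ℕ) (u : Fin (k + 1) → S) (a : Fin k → S) :
    u * cons1Hom k a * u⁻¹ = cons1Hom k ((u ∘ Fin.succ) * a * (u ∘ Fin.succ)⁻¹) := by
  funext j
  refine Fin.cases ?_ (fun j => ?_) j <;> simp [cons1Hom]

lemma cons_comm (k : ℕ) (a : S) (u : Fin k → S) :
    consHom k a * cons1Hom k u = cons1Hom k u * consHom k a := by
  funext j
  refine Fin.cases ?_ (fun j => ?_) j <;> simp [consHom, cons1Hom]

variable [Finite S] [IsSimpleGroup S]

/-- A surjective hom from a finite power of a nonabelian simple group `S` onto `S`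
factors through one coordinate, via an automorphism. -/
lemma hall_factor (hna : ∃ a b : S, a * b ≠ b * a) :
    ∀ (k : ℕ) (ψ : (Fin k → S) →* S), Function.Surjective ψ →
      ∃ (i : Fin k) (f : S ≃* S), ∀ g, ψ g = f (g i) := by
  intro k
  induction k with
  | zero =>
    intro ψ hψ
    exfalso
    have h1 : ∀ x : S, x = 1 := by
      intro x
      obtain ⟨g, hg⟩ := hψ x
      rw [← hg, Subsingleton.elim g 1, map_one]
    obtain ⟨a, b, hab⟩ := hna
    exact hab (by rw [h1 a, h1 b])
  | succ k ih =>
    intro ψ hψ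
    set ψ₀ : S →* S := ψ.comp (consHom k) with hψ₀
    set ψ₁ : (Fin k → S) →* S := ψ.comp (cons1Hom k) with hψ₁
    have hdec : ∀ g, ψ g = ψ₀ (g 0) * ψ₁ (g ∘ Fin.succ) := by
      intro g
      rw [hψ₀, hψ₁]
      simp only [MonoidHom.comp_apply]
      rw [← map_mul]
      congr 1
      exact decomp k g
    have hN₀ : (ψ₀.range).Normal := by
      constructor
      intro x hx t
      obtain ⟨a, rfl⟩ := hx
      obtain ⟨u, rfl⟩ := hψ t
      refine ⟨u 0 * a * (u 0)⁻¹, ?_⟩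
      simp only [hψ₀, MonoidHom.comp_apply]
      rw [← conj_consHom]
      simp
    have hN₁ : (ψ₁.range).Normal := by
      constructor
      intro x hx t
      obtain ⟨a, rfl⟩ := hx
      obtain ⟨u, rfl⟩ := hψ t
      refine ⟨(u ∘ Fin.succ) * a * (u ∘ Fin.succ)⁻¹, ?_⟩
      simp only [hψ₁, MonoidHom.comp_apply]
      rw [← conj_cons1Hom]
      simp
    rcases hN₀.eq_bot_or_eq_top with h0 | h0
    · -- ψ₀ trivial, so ψ factors through the tail
      have hψ₀1 : ∀ a : S, ψ₀ a = 1 := by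
        intro a
        have : ψ₀ a ∈ ψ₀.range := ⟨a, rfl⟩
        rw [h0] at this
        simpa using this
      have hfac : ∀ g, ψ g = ψ₁ (g ∘ Fin.succ) := by
        intro g; rw [hdec, hψ₀1, one_mul]
      have hψ₁s : Function.Surjective ψ₁ := by
        intro a
        obtain ⟨g, rfl⟩ := hψ a
        exact ⟨g ∘ Fin.succ, (hfac g).symm⟩
      obtain ⟨i, f, hf⟩ := ih ψ₁ hψ₁s
      exact ⟨i.succ, f, fun g => by rw [hfac, hf]; rfl⟩
    · rcases hN₁.eq_bot_or_eq_top with h1 | h1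
      · -- ψ₁ trivial, ψ factors through coordinate 0
        have hψ₁1 : ∀ u, ψ₁ u = 1 := by
          intro u
          have : ψ₁ u ∈ ψ₁.range := ⟨u, rfl⟩
          rw [h1] at this
          simpa using this
        have hfac : ∀ g, ψ g = ψ₀ (g 0) := by
          intro g; rw [hdec, hψ₁1, mul_one]
        have hψ₀s : Function.Surjective ψ₀ := by
          intro a
          obtain ⟨g, rfl⟩ := hψ a
          exact ⟨g 0, (hfac g).symm⟩
        have hbij : Function.Bijective ψ₀ := Finite.surjective_iff_bijective.mp hψ₀s
        exact ⟨0, MulEquiv.ofBijective ψ₀ hbij, fun g => hfac g⟩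
      · -- both ranges are ⊤ : S is abelian, contradiction
        exfalso
        obtain ⟨a, b, hab⟩ := hna
        have ha : a ∈ ψ₀.range := h0 ▸ Subgroup.mem_top a
        have hb : b ∈ ψ₁.range := h1 ▸ Subgroup.mem_top b
        obtain ⟨x, rfl⟩ := ha
        obtain ⟨u, rfl⟩ := hb
        apply hab
        simp only [hψ₀, hψ₁, MonoidHom.comp_apply]
        rw [← map_mul, ← map_mul, cons_comm]

/-- Key lemma: a subgroup of `Sᵏ` surjecting onto each factor with no two
coordinates linked by an automorphism is everything. -/
lemma hall_key (hna : ∃ a b : S, a * b ≠ b * a) :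
    ∀ (k : ℕ) (H : Subgroup (Fin k → S))
      (_ : ∀ (i : Fin k) (a : S), ∃ g ∈ H, g i = a)
      (_ : ∀ i j : Fin k, i ≠ j → ¬∃ f : S ≃* S, ∀ g ∈ H, g j = f (g i)),
      H = ⊤ := by
  intro k
  induction k with
  | zero =>
    intro H _ _
    rw [Subgroup.eq_top_iff']
    intro g
    rw [Subsingleton.elim g 1]
    exact H.one_mem
  | succ k ih =>
    intro H hsurj hlink
    set K : Subgroup (Fin k → S) := H.map (tailHom k) with hK
    have hKsurj : ∀ (i : Fin k) (a : S), ∃ g ∈ K, g i = a := by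
      intro i a
      obtain ⟨g, hg, hgi⟩ := hsurj i.succ a
      exact ⟨g ∘ Fin.succ, ⟨g, hg, rfl⟩, hgi⟩
    have hKlink : ∀ i j : Fin k, i ≠ j → ¬∃ f : S ≃* S, ∀ g ∈ K, g j = f (g i) := by
      intro i j hij ⟨f, hf⟩
      refine hlink i.succ j.succ (fun h => hij (Fin.succ_injective _ h)) ⟨f, fun g hg => ?_⟩
      exact hf (g ∘ Fin.succ) ⟨g, hg, rfl⟩
    have hKtop : K = ⊤ := ih K hKsurj hKlink
    set N : Subgroup S := H.comap (consHom k) with hNdef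
    have hNnormal : N.Normal := by
      constructor
      intro a ha t
      obtain ⟨g, hg, hg0⟩ := hsurj 0 t
      have : g * consHom k a * g⁻¹ ∈ H := by
        exact H.mul_mem (H.mul_mem hg ha) (H.inv_mem hg)
      rw [conj_consHom, hg0] at this
      exact this
    rcases hNnormal.eq_bot_or_eq_top with hN | hN
    · -- N = ⊥ : coordinate 0 is a function of the tail
      exfalso
      have huniq : ∀ g ∈ H, ∀ h ∈ H, g ∘ Fin.succ = h ∘ Fin.succ → g 0 = h 0 := by
        intro g hg h hh he
        have hmem : g * h⁻¹ ∈ H := H.mul_mem hg (H.inv_mem hh)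
        have heq : g * h⁻¹ = consHom k (g 0 * (h 0)⁻¹) := by
          funext j
          refine Fin.cases ?_ (fun j => ?_) j
          · simp [consHom]
          · have := congrFun he j
            simp only [Function.comp_apply] at this
            simp [consHom, this]
        rw [heq] at hmem
        have : g 0 * (h 0)⁻¹ ∈ N := hmem
        rw [hN] at this
        have : g 0 * (h 0)⁻¹ = 1 := by simpa using this
        exact mul_inv_eq_one.mp this
      have hex : ∀ u : Fin k → S, ∃ g, g ∈ H ∧ g ∘ Fin.succ = u := by
        intro u
        have : u ∈ K := hKtop ▸ Subgroup.mem_top u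
        obtain ⟨g, hg, hgu⟩ := this
        exact ⟨g, hg, hgu⟩
      classical
      let pick : (Fin k → S) → (Fin (k + 1) → S) := fun u => (hex u).choose
      have hpickH : ∀ u, pick u ∈ H := fun u => (hex u).choose_spec.1
      have hpickT : ∀ u, pick u ∘ Fin.succ = u := fun u => (hex u).choose_spec.2
      let φ : (Fin k → S) →* S := MonoidHom.mk' (fun u => pick u 0) (by
        intro u v
        have h1 : pick u * pick v ∈ H := H.mul_mem (hpickH u) (hpickH v)
        have h2 : (pick u * pick v) ∘ Fin.succ = u * v := by
          funext j
          simp only [Function.comp_apply, Pi.mul_apply]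
          rw [← congrFun (hpickT u) j, ← congrFun (hpickT v) j]
          rfl
        have := huniq (pick (u * v)) (hpickH (u * v)) (pick u * pick v) h1
          (by rw [hpickT, h2])
        simpa using this)
      have hφval : ∀ g ∈ H, φ (g ∘ Fin.succ) = g 0 := by
        intro g hg
        exact huniq (pick (g ∘ Fin.succ)) (hpickH _) g hg (hpickT _)
      have hφsurj : Function.Surjective φ := by
        intro a
        obtain ⟨g, hg, hg0⟩ := hsurj 0 a
        exact ⟨g ∘ Fin.succ, by rw [hφval g hg, hg0]⟩
      obtain ⟨i, f, hf⟩ := hall_factor hna k φ hφsurj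
      refine hlink i.succ 0 (Fin.succ_ne_zero i) ⟨f, fun g hg => ?_⟩
      rw [← hφval g hg, hf]
      rfl
    · -- N = ⊤ : H contains the whole first factor, hence is everything
      rw [Subgroup.eq_top_iff']
      intro g
      have : (g ∘ Fin.succ) ∈ K := hKtop ▸ Subgroup.mem_top _
      obtain ⟨h, hh, hht⟩ := this
      have hcons : consHom k (g 0 * (h 0)⁻¹) ∈ H := by
        have : g 0 * (h 0)⁻¹ ∈ N := hN ▸ Subgroup.mem_top _
        exact this
      have : consHom k (g 0 * (h 0)⁻¹) * h = g := by
        funext j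
        refine Fin.cases ?_ (fun j => ?_) j
        · simp [consHom]
        · have := congrFun hht j
          simp only [tailHom, MonoidHom.coe_mk, OneHom.coe_mk, Function.comp_apply] at this
          simp [consHom, this]
      rw [← this]
      exact H.mul_mem hcons hh

end HallAux

/-- Hall's theorem: diagonal tuples built from generating sequences `s₁,…,s_k` of a
finite nonabelian simple group `S` generate `Sᵏ` iff the `sᵢ` are pairwise
inequivalent under `Aut(S)`. -/
theorem hall_diagonal_generation (S : Type*) [Group S] [Finite S] [IsSimpleGroup S]
    (hna : ∃ a b : S, a * b ≠ b * a) (n k : ℕ)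
    (s : Fin k → Fin n → S) (hs : ∀ i, IsGenSeq (s i)) :
    IsGenSeq (fun j : Fin n => fun i : Fin k => s i j) ↔
      ∀ i j, i ≠ j → ¬∃ f : S ≃* S, ∀ l, f (s i l) = s j l := by
  classical
  set X : Set (Fin k → S) := Set.range (fun j : Fin n => fun i : Fin k => s i j) with hX
  constructor
  · intro htop i j hij ⟨f, hf⟩
    have hXD : Subgroup.closure X ≤
        MonoidHom.eqLocus (Pi.evalMonoidHom (fun _ : Fin k => S) j)
          ((f : S →* S).comp (Pi.evalMonoidHom (fun _ : Fin k => S) i)) := by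
      rw [Subgroup.closure_le]
      rintro _ ⟨l, rfl⟩
      exact (hf l).symm
    rw [IsGenSeq] at htop
    rw [htop, top_le_iff] at hXD
    obtain ⟨a, b, hab⟩ := hna
    have ha1 : a ≠ 1 := by
      intro h; apply hab; rw [h, one_mul, mul_one]
    set g : Fin k → S := fun m => if m = j then a else 1 with hg
    have hgmem : g ∈ MonoidHom.eqLocus (Pi.evalMonoidHom (fun _ : Fin k => S) j)
        ((f : S →* S).comp (Pi.evalMonoidHom (fun _ : Fin k => S) i)) := by
      rw [hXD]; trivial
    have : g j = f (g i) := hgmem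
    rw [hg] at this
    simp only [if_pos rfl, if_neg hij] at this
    rw [map_one] at this
    exact ha1 this
  · intro hpair
    rw [IsGenSeq]
    apply hall_key hna k
    · intro i a
      have hmap : (Subgroup.closure X).map (Pi.evalMonoidHom (fun _ : Fin k => S) i) = ⊤ := by
        rw [MonoidHom.map_closure]
        have : (Pi.evalMonoidHom (fun _ : Fin k => S) i) '' X = Set.range (s i) := by
          rw [hX, ← Set.range_comp]
          rfl
        rw [this]
        exact hs i
      have : a ∈ (Subgroup.closure X).map (Pi.evalMonoidHom (fun _ : Fin k => S) i) :=
        hmap ▸ Subgroup.mem_top a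
      obtain ⟨g, hg, hgi⟩ := this
      exact ⟨g, hg, hgi⟩
    · intro i j hij ⟨f, hf⟩
      refine hpair i j hij ⟨f, fun l => ?_⟩
      have hmem : (fun i' : Fin k => s i' l) ∈ Subgroup.closure X :=
        Subgroup.subset_closure ⟨l, rfl⟩
      exact (hf _ hmem).symm
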